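/- For all integers d ≥ k ≥ 2, the algebra E_d is k-round, the singleton {x_1} is a generating set of E_d, and l({x_1}) = (k−1)d − (k−2)(k−1); in particular l(E_d) ≥ (k−1)d − (k−2)(k−1). -/

import Mathlib

namespace P

/-- The list of leaves (letters) of a nonassociative word, in order. -/
def leafList {α : Type*} : FreeMagma α → List α
  | .of a => [a]
  | .mul x y => leafList x ++ leafList y

/-- The length of a nonassociative word: the number of factors. -/
def wlen {α : Type*} (w : FreeMagma α) : ℕ := (leafList w).length

/-- Evaluation of a formal word with letters in a magma `A`. -/
def evalA {A : Type*} [Mul A] (w : FreeMagma A) : A :=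
  FreeMagma.lift (id : A → A) w

/-- Evaluation of a formal word in variables `Fin n` under an assignment `v`. -/
def evalVar {A : Type*} [Mul A] {n : ℕ} (v : Fin n → A) (w : FreeMagma (Fin n)) : A :=
  FreeMagma.lift v w

/-- `w` is a word in the set `S`: all its letters belong to `S`. -/
def HasLeavesIn {A : Type*} (S : Set A) (w : FreeMagma A) : Prop :=
  ∀ a ∈ leafList w, a ∈ S

/-- `L_i(S)`: the span of all values of words in `S` of length at most `i`.
For `i = 0` this is `0`, since every word has length at least 1. -/
def Lspan (F : Type*) {A : Type*} [Field F] [NonUnitalNonAssocRing A] [Module F A]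
    (S : Set A) (i : ℕ) : Submodule F A :=
  Submodule.span F { a | ∃ w : FreeMagma A, HasLeavesIn S w ∧ wlen w ≤ i ∧ evalA w = a }

/-- `S` is a generating set of the algebra `A`. -/
def Generates (F : Type*) {A : Type*} [Field F] [NonUnitalNonAssocRing A] [Module F A]
    (S : Set A) : Prop :=
  Submodule.span F { a | ∃ w : FreeMagma A, HasLeavesIn S w ∧ evalA w = a } = ⊤

/-- The length `l(S)` of a generating set: the least `k` with `L_k(S) = A`. -/
noncomputable def lenS (F : Type*) {A : Type*} [Field F] [NonUnitalNonAssocRing A] [Module F A]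
    (S : Set A) : ℕ :=
  sInf { k | Lspan F S k = ⊤ }

/-- The characteristic sequence of a generating set `S`, as a predicate on a
nondecreasing sequence `m : Fin d → ℕ`. -/
def IsCharSeq (F : Type*) {A : Type*} [Field F] [NonUnitalNonAssocRing A] [Module F A]
    (S : Set A) {d : ℕ} (m : Fin d → ℕ) : Prop :=
  Monotone m ∧ (∀ j, 1 ≤ m j) ∧
    ∀ t : ℕ, 1 ≤ t →
      (Finset.univ.filter fun j => m j = t).card =
        Module.finrank F (Lspan F S t) - Module.finrank F (Lspan F S (t - 1))

/-- `w` is a multilinear word using each variable of `T` exactly once. -/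
def IsMultilinearOn {n : ℕ} (T : Finset (Fin n)) (w : FreeMagma (Fin n)) : Prop :=
  (leafList w : Multiset (Fin n)) = T.val

/-- Membership in `D_0(z_0,…,z_k)`: multilinear words in `z_0,…,z_k` except those of
length `k+1` in which `z_0` is a factor of the last multiplication. -/
def InD0 {k : ℕ} (w : FreeMagma (Fin (k + 1))) : Prop :=
  (leafList w : Multiset (Fin (k + 1))).Nodup ∧
    ¬∃ u : FreeMagma (Fin (k + 1)),
        IsMultilinearOn (Finset.univ.erase 0) u ∧
          (w = FreeMagma.of 0 * u ∨ w = u * FreeMagma.of 0)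

/-- Membership in `D_l(z_0,…,z_k)`: multilinear words in `z_0,…,z_k` except those of
length `k+1` in which `z_0` occurs in the first factor of the last multiplication. -/
def InDl {k : ℕ} (w : FreeMagma (Fin (k + 1))) : Prop :=
  (leafList w : Multiset (Fin (k + 1))).Nodup ∧
    ¬((leafList w : Multiset (Fin (k + 1))) = (Finset.univ : Finset (Fin (k + 1))).val ∧
      ∃ w1 w2 : FreeMagma (Fin (k + 1)), w = w1 * w2 ∧ (0 : Fin (k + 1)) ∈ leafList w1)

/-- Membership in `D_r(z_0,…,z_k)`: multilinear words in `z_0,…,z_k` except those of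
length `k+1` in which `z_0` occurs in the second factor of the last multiplication. -/
def InDr {k : ℕ} (w : FreeMagma (Fin (k + 1))) : Prop :=
  (leafList w : Multiset (Fin (k + 1))).Nodup ∧
    ¬((leafList w : Multiset (Fin (k + 1))) = (Finset.univ : Finset (Fin (k + 1))).val ∧
      ∃ w1 w2 : FreeMagma (Fin (k + 1)), w = w1 * w2 ∧ (0 : Fin (k + 1)) ∈ leafList w2)

/-- The algebra `A` is `k`-mixing. -/
def IsKMixing (F A : Type*) [Field F] [NonUnitalNonAssocRing A] [Module F A] (k : ℕ) : Prop :=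
  ∀ (x : A) (y : Fin k → A) (w : FreeMagma (Fin (k + 1))),
    (∃ u, IsMultilinearOn (Finset.univ.erase 0) u ∧
        (w = FreeMagma.of 0 * u ∨ w = u * FreeMagma.of 0)) →
      evalVar (Fin.cons x y) w ∈
        Submodule.span F
          { a | ∃ z : FreeMagma (Fin (k + 1)), InD0 z ∧ evalVar (Fin.cons x y) z = a }

/-- The algebra `A` is `k`-sliding. -/
def IsKSliding (F A : Type*) [Field F] [NonUnitalNonAssocRing A] [Module F A] (k : ℕ) : Prop :=
  (∀ (x : A) (y : Fin k → A) (u : FreeMagma (Fin (k + 1))),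
      IsMultilinearOn (Finset.univ.erase 0) u →
        evalVar (Fin.cons x y) (u * FreeMagma.of 0) ∈
          Submodule.span F
            { a | ∃ z : FreeMagma (Fin (k + 1)), InDl z ∧ evalVar (Fin.cons x y) z = a }) ∨
  (∀ (x : A) (y : Fin k → A) (u : FreeMagma (Fin (k + 1))),
      IsMultilinearOn (Finset.univ.erase 0) u →
        evalVar (Fin.cons x y) (FreeMagma.of 0 * u) ∈
          Submodule.span F
            { a | ∃ z : FreeMagma (Fin (k + 1)), InDr z ∧ evalVar (Fin.cons x y) z = a })

/-- `u` is a subword of `w`. -/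
inductive IsSubword {A : Type*} : FreeMagma A → FreeMagma A → Prop
  | refl (w : FreeMagma A) : IsSubword w w
  | left {s u : FreeMagma A} (v : FreeMagma A) : IsSubword s u → IsSubword s (u * v)
  | right (u : FreeMagma A) {s v : FreeMagma A} : IsSubword s v → IsSubword s (u * v)

/-- `IsSprout w L`: `L` is a sprout sequence of the word `w` (with the convention that
words of length 1 have the empty sprout sequence). -/
inductive IsSprout {A : Type*} : FreeMagma A → List (FreeMagma A) → Prop
  | single (a : A) : IsSprout (FreeMagma.of a) []
  | cons_l {u v : FreeMagma A} {L : List (FreeMagma A)} :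
      wlen u ≤ wlen v → IsSprout v L → IsSprout (u * v) (u :: L)
  | cons_r {u v : FreeMagma A} {L : List (FreeMagma A)} :
      wlen v ≤ wlen u → IsSprout u L → IsSprout (u * v) (v :: L)

/-- A word is `k`-bounded if it has length 1 or admits an `l`-sprout sequence all of whose
terms are strictly less than `k`. -/
def KBounded {A : Type*} (k : ℕ) (w : FreeMagma A) : Prop :=
  ∃ L : List (FreeMagma A), IsSprout w L ∧ ∀ u ∈ L, wlen u < k

/-- A word `w` in `S` is irreducible if it does not lie in `L_m(S)` for any `m < l(w)`. -/
def Irred (F : Type*) {A : Type*} [Field F] [NonUnitalNonAssocRing A] [Module F A]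
    (S : Set A) (w : FreeMagma A) : Prop :=
  ∀ m : ℕ, m < wlen w → evalA w ∉ Lspan F S m

/-- The step function of a word: the least `t` such that `w` has a subword of
length `l(w) - 2t - 1`. -/
noncomputable def stepFn {A : Type*} (w : FreeMagma A) : ℕ :=
  sInf { t : ℕ | ∃ u : FreeMagma A, IsSubword u w ∧ wlen u + 2 * t + 1 = wlen w }

/-- `w` is a `p`-step word for the generating set `S`. -/
def IsPStepWord (F : Type*) {A : Type*} [Field F] [NonUnitalNonAssocRing A] [Module F A]
    (S : Set A) (w : FreeMagma A) (p : ℕ) : Prop :=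
  HasLeavesIn S w ∧ Irred F S w ∧ KBounded 3 w ∧ stepFn w = p ∧
    ∀ v : FreeMagma A, HasLeavesIn S v → Irred F S v → KBounded 3 v → wlen v = wlen w →
      p ≤ stepFn v

/-- `A` is `k`-round: `x · v = 0` for every product `v` of `k` elements. -/
def IsKRound (A : Type*) [NonUnitalNonAssocRing A] (k : ℕ) : Prop :=
  ∀ (x : A) (w : FreeMagma A), wlen w = k → x * evalA w = 0

/-- `A` is `k`-based. -/
def IsKBased (A : Type*) [NonUnitalNonAssocRing A] (k : ℕ) : Prop :=
  ∀ (x : A) (u v : FreeMagma A), wlen u + wlen v = k →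
    x * (evalA u * evalA v) = evalA u * (x * evalA v) ∧
      (evalA u * evalA v) * x = (evalA u * x) * evalA v

/-- The set `P(x,y,z)`. -/
def Pset {A : Type*} [Mul A] (x y z : A) : Set A :=
  {(x*z)*y, (z*x)*y, (y*z)*x, (z*y)*x, x*(z*y), x*(y*z), y*(x*z), y*(z*x),
    x*y, y*x, x*z, z*x, y*z, z*y, x, y, z}

/-- The set `Q_l(x,y,z)`. -/
def Qlset {A : Type*} [Mul A] (x y z : A) : Set A :=
  {x*(z*y), x*(y*z), y*(x*z), y*(z*x), x*y, y*x, x*z, z*x, y*z, z*y, x, y, z}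

/-- The set `Q_r(x,y,z)`. -/
def Qrset {A : Type*} [Mul A] (x y z : A) : Set A :=
  {(x*z)*y, (z*x)*y, (y*z)*x, (z*y)*x, x*y, y*x, x*z, z*x, y*z, z*y, x, y, z}

/-- `A` is a mixing algebra. -/
def IsMixingAlg (F A : Type*) [Field F] [NonUnitalNonAssocRing A] [Module F A] : Prop :=
  ∀ x y z : A, (x*y)*z ∈ Submodule.span F (Pset x y z) ∧
    z*(x*y) ∈ Submodule.span F (Pset x y z)

/-- `A` is a sliding algebra. -/
def IsSlidingAlg (F A : Type*) [Field F] [NonUnitalNonAssocRing A] [Module F A] : Prop :=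
  (∀ x y z : A, z*(x*y) ∈ Submodule.span F (Qrset x y z)) ∨
  (∀ x y z : A, (x*y)*z ∈ Submodule.span F (Qlset x y z))


section Aux

lemma leafList_of {α : Type*} (a : α) : leafList (FreeMagma.of a) = [a] := rfl

lemma leafList_mul {α : Type*} (u v : FreeMagma α) :
    leafList (u * v) = leafList u ++ leafList v := rfl

lemma wlen_of {α : Type*} (a : α) : wlen (FreeMagma.of a) = 1 := rfl

lemma wlen_mul {α : Type*} (u v : FreeMagma α) : wlen (u * v) = wlen u + wlen v := by
  show (leafList u ++ leafList v).length = _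
  rw [List.length_append]; rfl

lemma one_le_wlen {α : Type*} (w : FreeMagma α) : 1 ≤ wlen w := by
  induction w using FreeMagma.recOnMul with
  | ih1 a => exact le_refl 1
  | ih2 u v ihu ihv => rw [wlen_mul]; omega

lemma evalA_of {A : Type*} [Mul A] (a : A) : evalA (FreeMagma.of a) = a := rfl

lemma evalA_mul {A : Type*} [Mul A] (u v : FreeMagma A) :
    evalA (u * v) = evalA u * evalA v := map_mul (FreeMagma.lift (id : A → A)) u v

/-- auxiliary length function -/
def cfun (k n : ℕ) : ℕ := if n + 2 ≤ k then n + 1 else (n + 3 - k) * (k - 1)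

lemma cfun_zero (k : ℕ) (hk : 2 ≤ k) : cfun k 0 = 1 := by
  simp only [cfun]; rw [if_pos (by omega)]

lemma cfun_succ_lo (k n : ℕ) (h : n + 3 ≤ k) : cfun k (n + 1) = cfun k n + 1 := by
  simp only [cfun]; rw [if_pos (by omega), if_pos (by omega)]

lemma cfun_km2 (k : ℕ) (hk : 2 ≤ k) : cfun k (k - 2) = k - 1 := by
  simp only [cfun]; rw [if_pos (by omega)]; omega

lemma cfun_succ_hi (k n : ℕ) (hk : 2 ≤ k) (h : k ≤ n + 2) :
    cfun k (n + 1) = cfun k n + (k - 1) := by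
  simp only [cfun]
  rw [if_neg (by omega)]
  by_cases h' : n + 2 ≤ k
  · rw [if_pos h']
    have e1 : n + 1 + 3 - k = 2 := by omega
    have e2 : n + 1 = k - 1 := by omega
    rw [e1, e2]; omega
  · rw [if_neg h']
    have e1 : n + 1 + 3 - k = (n + 3 - k) + 1 := by omega
    rw [e1, Nat.succ_mul]

lemma cfun_mono (k : ℕ) (hk : 2 ≤ k) : Monotone (cfun k) := by
  apply monotone_nat_of_le_succ
  intro n
  by_cases h : n + 3 ≤ k
  · rw [cfun_succ_lo k n h]; omega
  · rw [cfun_succ_hi k n hk (by omega)]; omega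

lemma cfun_last (k d : ℕ) (hk : 2 ≤ k) (hkd : k ≤ d) :
    cfun k (d - 1) = (k - 1) * d - (k - 2) * (k - 1) := by
  simp only [cfun]
  rw [if_neg (by omega)]
  have e1 : d - 1 + 3 - k = d - (k - 2) := by omega
  have e2 : (k - 1) * d = (d - (k - 2)) * (k - 1) + (k - 2) * (k - 1) := by
    rw [← Nat.add_mul]
    have : d - (k - 2) + (k - 2) = d := by omega
    rw [this, Nat.mul_comm]
  rw [e1, e2, Nat.add_sub_cancel]

lemma mul_mem_of_span {F A : Type*} [Field F] [NonUnitalNonAssocRing A] [Module F A]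
    [SMulCommClass F A A] [IsScalarTower F A A]
    {S1 S2 : Set A} {T : Submodule F A}
    (h : ∀ a ∈ S1, ∀ c ∈ S2, a * c ∈ T)
    {x y : A} (hx : x ∈ Submodule.span F S1) (hy : y ∈ Submodule.span F S2) :
    x * y ∈ T := by
  have key : ∀ y, y ∈ Submodule.span F S2 → ∀ x, x ∈ Submodule.span F S1 → x * y ∈ T := by
    intro y hy
    induction hy using Submodule.span_induction with
    | mem c hc =>
      intro x hx
      induction hx using Submodule.span_induction with
      | mem a ha => exact h a ha c hc
      | zero => rw [zero_mul]; exact T.zero_mem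
      | add x1 x2 _ _ ih1 ih2 => rw [add_mul]; exact T.add_mem ih1 ih2
      | smul r x _ ih => rw [smul_mul_assoc]; exact T.smul_mem r ih
    | zero => intro x _; rw [mul_zero]; exact T.zero_mem
    | add y1 y2 _ _ ih1 ih2 => intro x hx; rw [mul_add]; exact T.add_mem (ih1 x hx) (ih2 x hx)
    | smul r y _ ih => intro x hx; rw [mul_smul_comm]; exact T.smul_mem r (ih x hx)
  exact key y hy x hx

end Aux


section Statement
variable {F A : Type*} [Field F] [NonUnitalNonAssocRing A] [Module F A]
  [SMulCommClass F A A] [IsScalarTower F A A]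

/- STATEMENT 8 -/
theorem stmt8 (k d : ℕ) (hk : 2 ≤ k) (hkd : k ≤ d)
    (b : Module.Basis (Fin d) F A)
    (h1 : ∀ i : Fin d, (hi : (i : ℕ) + 3 ≤ k) →
      b i * b ⟨0, by omega⟩ = b ⟨(i : ℕ) + 1, by omega⟩)
    (h2 : ∀ i : Fin d, k ≤ (i : ℕ) + 2 → (hi2 : (i : ℕ) + 2 ≤ d) →
      b i * b ⟨k - 2, by omega⟩ = b ⟨(i : ℕ) + 1, by omega⟩)
    (h0 : ∀ i j : Fin d, ¬((j : ℕ) = 0 ∧ (i : ℕ) + 3 ≤ k) →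
      ¬((j : ℕ) + 2 = k ∧ k ≤ (i : ℕ) + 2 ∧ (i : ℕ) + 2 ≤ d) → b i * b j = 0) :
    IsKRound A k ∧ Generates F {b ⟨0, by omega⟩} ∧
      lenS F {b ⟨0, by omega⟩} = (k - 1) * d - (k - 2) * (k - 1) ∧
      ∃ S : Set A, S.Finite ∧ Generates F S ∧
        (k - 1) * d - (k - 2) * (k - 1) ≤ lenS F S := by
  have hd : 0 < d := by omega
  -- basic notation
  set S : Set A := {b ⟨0, hd⟩} with hS
  set W : ℕ → Submodule F A :=
    fun m => Submodule.span F (b '' {i : Fin d | m ≤ (i : ℕ)}) with hW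
  have Wanti : ∀ {m n : ℕ}, m ≤ n → W n ≤ W m := by
    intro m n h
    exact Submodule.span_mono (Set.image_mono (fun i hi => le_trans h hi))
  have hW0 : ∀ x : A, x ∈ W 0 := by
    intro x
    have he : (Set.univ : Set (Fin d)) = {i : Fin d | 0 ≤ (i : ℕ)} := by
      ext i; simp
    have : W 0 = ⊤ := by
      rw [show W 0 = Submodule.span F (⇑b '' {i : Fin d | 0 ≤ (i : ℕ)}) from rfl,
        ← he, Set.image_univ, b.span_eq]
    rw [this]; trivial
  -- multiplication of spans
  have hmulW : ∀ (p q : ℕ) (x y : A), x ∈ W p → y ∈ W q →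
      x * y ∈ W (min (p + q + 1) (k - 1)) := by
    intro p q x y hx hy
    refine mul_mem_of_span ?_ hx hy
    rintro a ⟨i, hi, rfl⟩ c ⟨j, hj, rfl⟩
    simp only [Set.mem_setOf_eq] at hi hj
    by_cases hc1 : (j : ℕ) = 0 ∧ (i : ℕ) + 3 ≤ k
    · have hj0 : j = ⟨0, hd⟩ := Fin.ext hc1.1
      rw [hj0]
      rw [h1 i hc1.2]
      exact Submodule.subset_span ⟨⟨(i : ℕ) + 1, by omega⟩, by
        simp only [Set.mem_setOf_eq]; omega, rfl⟩
    · by_cases hc2 : (j : ℕ) + 2 = k ∧ k ≤ (i : ℕ) + 2 ∧ (i : ℕ) + 2 ≤ d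
      · have hjk : j = ⟨k - 2, by omega⟩ := Fin.ext (by simp; omega)
        rw [hjk]
        rw [h2 i hc2.2.1 hc2.2.2]
        exact Submodule.subset_span ⟨⟨(i : ℕ) + 1, by omega⟩, by
          simp only [Set.mem_setOf_eq]; omega, rfl⟩
      · rw [h0 i j hc1 hc2]
        exact (W _).zero_mem
  -- values of words of bounded length
  have evalW : ∀ w : FreeMagma A, evalA w ∈ W (min (wlen w - 1) (k - 1)) := by
    intro w
    induction w using FreeMagma.recOnMul with
    | ih1 a =>
      rw [evalA_of]
      have : min (wlen (FreeMagma.of a) - 1) (k - 1) = 0 := by rw [wlen_of]; omega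
      rw [this]; exact hW0 a
    | ih2 u v ihu ihv =>
      rw [evalA_mul]
      have h := hmulW _ _ _ _ ihu ihv
      refine Wanti ?_ h
      have hu := one_le_wlen u
      have hv := one_le_wlen v
      rw [wlen_mul]
      omega
  -- k-roundness
  have roundA : IsKRound A k := by
    intro x w hw
    have hy : evalA w ∈ W (k - 1) := by
      have h := evalW w
      rw [hw, min_eq_right (by omega : k - 1 ≤ k - 1)] at h
      exact h
    have hgen : ∀ j : Fin d, k - 1 ≤ (j : ℕ) → ∀ z : A, z * b j = 0 := by
      intro j hj
      have hmap : LinearMap.mulRight F (b j) = 0 := by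
        apply b.ext
        intro i
        rw [LinearMap.mulRight_apply]
        rw [h0 i j (by omega) (by omega)]
        rfl
      intro z
      have := LinearMap.ext_iff.mp hmap z
      simpa using this
    have hzero : ∀ y, y ∈ W (k - 1) → x * y = 0 := by
      intro y hy'
      induction hy' using Submodule.span_induction with
      | mem c hc =>
        obtain ⟨j, hj, rfl⟩ := hc
        exact hgen j hj x
      | zero => rw [mul_zero]
      | add y1 y2 _ _ ih1 ih2 => rw [mul_add, ih1, ih2, add_zero]
      | smul r y _ ih => rw [mul_smul_comm, ih, smul_zero]
    exact hzero _ hy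
  -- existence of words
  have exists_word : ∀ j : ℕ, ∀ hj : j < d, ∃ w : FreeMagma A,
      HasLeavesIn S w ∧ wlen w = cfun k j ∧ evalA w = b ⟨j, hj⟩ := by
    intro j
    induction j using Nat.strong_induction_on with
    | _ j ih =>
      intro hj
      match j, hj with
      | 0, hj =>
        refine ⟨FreeMagma.of (b ⟨0, hd⟩), ?_, ?_, ?_⟩
        · intro a ha
          rw [leafList_of, List.mem_singleton] at ha
          rw [ha]; exact rfl
        · rw [wlen_of, cfun_zero k hk]
        · exact evalA_of _
      | (n+1), hj =>
        by_cases hcase : n + 3 ≤ k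
        · obtain ⟨w, hw1, hw2, hw3⟩ := ih n (by omega) (by omega)
          refine ⟨w * FreeMagma.of (b ⟨0, hd⟩), ?_, ?_, ?_⟩
          · intro a ha
            rw [leafList_mul, List.mem_append] at ha
            rcases ha with ha | ha
            · exact hw1 a ha
            · rw [leafList_of, List.mem_singleton] at ha; rw [ha]; exact rfl
          · rw [wlen_mul, hw2, wlen_of, cfun_succ_lo k n hcase]
          · rw [evalA_mul, hw3, evalA_of]
            exact h1 ⟨n, by omega⟩ hcase
        · obtain ⟨w1, h11, h12, h13⟩ := ih n (by omega) (by omega)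
          obtain ⟨w2, h21, h22, h23⟩ := ih (k - 2) (by omega) (by omega)
          refine ⟨w1 * w2, ?_, ?_, ?_⟩
          · intro a ha
            rw [leafList_mul, List.mem_append] at ha
            rcases ha with ha | ha
            · exact h11 a ha
            · exact h21 a ha
          · rw [wlen_mul, h12, h22, cfun_succ_hi k n hk (by omega), cfun_km2 k hk]
          · rw [evalA_mul, h13, h23]
            exact h2 ⟨n, by omega⟩ (by simp; omega) (by simp; omega)
  -- structure of values of words in S
  have eval_struct : ∀ w : FreeMagma A, HasLeavesIn S w →
      evalA w = 0 ∨ ∃ (j : ℕ) (hj : j < d), cfun k j ≤ wlen w ∧ evalA w = b ⟨j, hj⟩ := by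
    intro w
    induction w using FreeMagma.recOnMul with
    | ih1 a =>
      intro hl
      right
      have ha : a = b ⟨0, hd⟩ := hl a (by rw [leafList_of]; exact List.mem_singleton_self a)
      exact ⟨0, hd, by rw [wlen_of, cfun_zero k hk], by rw [evalA_of, ha]⟩
    | ih2 u v ihu ihv =>
      intro hl
      have hlu : HasLeavesIn S u := fun a ha =>
        hl a (by rw [leafList_mul]; exact List.mem_append_left _ ha)
      have hlv : HasLeavesIn S v := fun a ha =>
        hl a (by rw [leafList_mul]; exact List.mem_append_right _ ha)
      rcases ihu hlu with h | ⟨i, hi, hci, hei⟩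
      · left; rw [evalA_mul, h, zero_mul]
      rcases ihv hlv with h | ⟨j, hj, hcj, hej⟩
      · left; rw [evalA_mul, h, mul_zero]
      rw [evalA_mul, hei, hej]
      by_cases hc1 : j = 0 ∧ i + 3 ≤ k
      · right
        obtain ⟨hj0, hik⟩ := hc1
        subst hj0
        refine ⟨i + 1, by omega, ?_, ?_⟩
        · have h1v := one_le_wlen v
          rw [wlen_mul, cfun_succ_lo k i hik]
          omega
        · exact h1 ⟨i, hi⟩ hik
      · by_cases hc2 : j + 2 = k ∧ k ≤ i + 2 ∧ i + 2 ≤ d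
        · right
          obtain ⟨hjk, hik, hid⟩ := hc2
          have hjval : j = k - 2 := by omega
          subst hjval
          refine ⟨i + 1, by omega, ?_, ?_⟩
          · rw [wlen_mul, cfun_succ_hi k i hk (by omega)]
            rw [cfun_km2 k hk] at hcj
            omega
          · exact h2 ⟨i, hi⟩ (by simp; omega) (by simp; omega)
        · left
          rw [h0 ⟨i, hi⟩ ⟨j, hj⟩ (by simp; omega) (by simp; omega)]
  -- Lspan upper bound
  have Lle : ∀ m : ℕ, Lspan F S m ≤
      Submodule.span F (b '' {i : Fin d | cfun k (i : ℕ) ≤ m}) := by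
    intro m
    apply Submodule.span_le.mpr
    rintro a ⟨w, hw, hwl, rfl⟩
    rcases eval_struct w hw with h | ⟨j, hj, hcj, hej⟩
    · rw [h]; exact (Submodule.span F _).zero_mem
    · rw [hej]
      exact Submodule.subset_span ⟨⟨j, hj⟩, by simp only [Set.mem_setOf_eq]; omega, rfl⟩
  have Lmono : ∀ {m n : ℕ}, m ≤ n → Lspan F S m ≤ Lspan F S n := by
    intro m n h
    apply Submodule.span_mono
    rintro a ⟨w, hw, hwl, rfl⟩
    exact ⟨w, hw, by omega, rfl⟩
  set N : ℕ := cfun k (d - 1) with hNdef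
  have hNval : N = (k - 1) * d - (k - 2) * (k - 1) := cfun_last k d hk hkd
  have hN1 : 1 ≤ N := by
    have := cfun_mono k hk (Nat.zero_le (d - 1))
    rw [cfun_zero k hk] at this
    exact this
  -- Lspan N = ⊤
  have hNtop : Lspan F S N = ⊤ := by
    rw [eq_top_iff, ← b.span_eq]
    apply Submodule.span_le.mpr
    rintro _ ⟨i, rfl⟩
    obtain ⟨w, hw1, hw2, hw3⟩ := exists_word (i : ℕ) i.isLt
    refine Submodule.subset_span ⟨w, hw1, ?_, ?_⟩
    · rw [hw2]; exact cfun_mono k hk (by omega)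
    · rw [hw3]
  -- Lspan (N-1) ≠ ⊤
  have hNm1 : Lspan F S (N - 1) ≠ ⊤ := by
    intro htop
    have hmem : b ⟨d - 1, by omega⟩ ∈ Lspan F S (N - 1) := by rw [htop]; trivial
    have hmem2 := Lle (N - 1) hmem
    refine LinearIndependent.notMem_span_image b.linearIndependent ?_ hmem2
    simp only [Set.mem_setOf_eq]
    omega
  have hlen : lenS F S = N := by
    apply le_antisymm
    · exact Nat.sInf_le hNtop
    · refine le_csInf ⟨N, hNtop⟩ ?_
      intro t ht
      by_contra h'
      push_neg at h'
      exact hNm1 (eq_top_iff.mpr (ht ▸ Lmono (by omega : t ≤ N - 1)))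
  have hGen : Generates F S := by
    rw [Generates, eq_top_iff, ← b.span_eq]
    apply Submodule.span_le.mpr
    rintro _ ⟨i, rfl⟩
    obtain ⟨w, hw1, hw2, hw3⟩ := exists_word (i : ℕ) i.isLt
    exact Submodule.subset_span ⟨w, hw1, hw3⟩
  refine ⟨roundA, hGen, by rw [← hNval]; exact hlen, S, Set.finite_singleton _, hGen, ?_⟩
  rw [hlen, hNval]


end Statement

end P
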